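/- A rooted digraph L ⊆ D is D-vertex-large if and only if L contains all outgoing edges of r in D, and 𝔖_L(v) ∩ 𝔖_D(v) ≠ ∅ for every v ∈ V−r. -/

import Mathlib

namespace FlamePaper

universe u
variable {V : Type u}

/-- A (nonempty, repetition-free) directed path, given by the list of its vertices;
its edge set consists of the pairs of consecutive vertices. A one-vertex list is the
trivial `v→v` path. -/
structure DiPath (V : Type u) where
  verts : List V
  ne : verts ≠ []
  nodup : verts.Nodup

namespace DiPath
variable (P : DiPath V)
def first : V := P.verts.head P.ne
def last : V := P.verts.getLast P.ne
def vertexSet : Set V := {x | x ∈ P.verts}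
def edges : Set (V × V) := {e | e ∈ P.verts.zip P.verts.tail}
def internal : Set V := P.vertexSet \ {P.first, P.last}
/-- The last edge of `P` (as a set; empty for the trivial path). -/
def lastEdge : Set (V × V) := {e ∈ P.edges | e.2 = P.last}
end DiPath

/-- `P` is a path of the digraph `D`. -/
def IsPathIn (D : Set (V × V)) (P : DiPath V) : Prop := P.edges ⊆ D

/-- `P` is an `a→b` path in `D`. -/
def IsPath (D : Set (V × V)) (a b : V) (P : DiPath V) : Prop :=
  IsPathIn D P ∧ P.first = a ∧ P.last = b

/-- The set of ingoing edges of `v` in `D`. -/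
def inEdges (D : Set (V × V)) (v : V) : Set (V × V) := {e ∈ D | e.2 = v}

/-- The set of outgoing edges of `v` in `D`. -/
def outEdges (D : Set (V × V)) (v : V) : Set (V × V) := {e ∈ D | e.1 = v}

/-- A rooted digraph: the root has no ingoing edges. -/
def IsRooted (D : Set (V × V)) (r : V) : Prop := inEdges D r = ∅

/-- `Ps` is a system of internally disjoint `r→v` paths in `D`: any two distinct
members share exactly the vertices `r` and `v`. -/
def IntDisjSystem (D : Set (V × V)) (r v : V) (Ps : Set (DiPath V)) : Prop :=
  (∀ P ∈ Ps, IsPath D r v P) ∧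
  ∀ P ∈ Ps, ∀ Q ∈ Ps, P ≠ Q → P.vertexSet ∩ Q.vertexSet = {r, v}

/-- `A_last(Ps)`: the set of last edges of the paths in `Ps`. -/
def lastEdges (Ps : Set (DiPath V)) : Set (V × V) := ⋃ P ∈ Ps, P.lastEdge

/-- `𝒢_D(v)`: the set of those `I ⊆ in_D(v)` which arise as the set of last edges
of a system of internally disjoint `r→v` paths of `D`. -/
def GSet (D : Set (V × V)) (r v : V) : Set (Set (V × V)) :=
  {I | ∃ Ps, IntDisjSystem D r v Ps ∧ lastEdges Ps = I}

/-- `Ps ∈ ℑ_D(v)`: an internally disjoint system of `r→v` paths of `D` from each member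
of which one can choose either an internal vertex or an edge so that the resulting set
meets every `r→v` path of `D`. -/
def EMSystem (D : Set (V × V)) (r v : V) (Ps : Set (DiPath V)) : Prop :=
  IntDisjSystem D r v Ps ∧
  ∃ sel : DiPath V → V ⊕ (V × V),
    (∀ P ∈ Ps, (∀ x, sel P = Sum.inl x → x ∈ P.internal) ∧
              (∀ e, sel P = Sum.inr e → e ∈ P.edges)) ∧
    ∀ Q : DiPath V, IsPath D r v Q →
      ∃ P ∈ Ps, (∀ x, sel P = Sum.inl x → x ∈ Q.vertexSet) ∧
               (∀ e, sel P = Sum.inr e → e ∈ Q.edges)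

/-- The path-system `Ps` lies in `L`. -/
def LiesIn (Ps : Set (DiPath V)) (L : Set (V × V)) : Prop := ∀ P ∈ Ps, IsPathIn L P

/-- `L` is a `D`-vertex-large spanning subdigraph of `D`. -/
def IsLarge (D L : Set (V × V)) (r : V) : Prop :=
  L ⊆ D ∧ ∀ v, v ≠ r → ∃ Ps, EMSystem D r v Ps ∧ LiesIn Ps L

/-- `F` is a vertex-flame with root `r`. -/
def IsFlame (F : Set (V × V)) (r : V) : Prop :=
  ∀ v, v ≠ r → inEdges F v ∈ GSet F r v

/-- `F` is a quasi-vertex-flame with root `r`. -/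
def IsQuasiFlame (F : Set (V × V)) (r : V) : Prop :=
  ∀ v, v ≠ r → ∀ I ⊆ inEdges F v, I.Finite → I ∈ GSet F r v

/-- `S` separates `b` from `a` in `D`: every `a→b` path of `D` meets `S`. -/
def Separates (D : Set (V × V)) (a b : V) (S : Set V) : Prop :=
  ∀ P : DiPath V, IsPath D a b P → (P.vertexSet ∩ S).Nonempty

/-- `𝔖_D(v)`: the Erdős–Menger separations corresponding to `v`. -/
def SepSet (D : Set (V × V)) (r v : V) : Set (Set V) :=
  {S | r ∉ S ∧ v ∉ S ∧ Separates (D \ {(r, v)}) r v S ∧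
    ∃ Ps, IntDisjSystem D r v Ps ∧
      ∃ sel : DiPath V → V, (∀ P ∈ Ps, sel P ∈ P.internal) ∧ S = sel '' Ps}

/-- The entrance of `X` with respect to `D`. -/
def entrance (D : Set (V × V)) (X : Set V) : Set V :=
  {v ∈ X | ∃ u, u ∉ X ∧ (u, v) ∈ D}

/-- `int_D(X) = X ∖ ent_D(X)`. -/
def interiorSet (D : Set (V × V)) (X : Set V) : Set V := X \ entrance D X

/-- `B` is a `v`-bubble of `D` (with root `r`): `B ⊆ V − r` and there is a `v`-infan
`{P_u : u ∈ ent_D(B)}` in `D ∩ (B × B)` where `P_u` starts at `u`. -/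
def IsBubble (D : Set (V × V)) (r v : V) (B : Set V) : Prop :=
  r ∉ B ∧
  ∃ F : V → DiPath V,
    (∀ u ∈ entrance D B, IsPath (D ∩ B ×ˢ B) u v (F u)) ∧
    ∀ u ∈ entrance D B, ∀ u' ∈ entrance D B, u ≠ u' →
      (F u).vertexSet ∩ (F u').vertexSet = {v}

/-- `bubb_D(v)`. -/
def bubbles (D : Set (V × V)) (r v : V) : Set (Set V) := {B | IsBubble D r v B}

/-- `B_{v,D}`: the union of all `v`-bubbles of `D`. -/
def maxBubble (D : Set (V × V)) (r v : V) : Set V := ⋃₀ bubbles D r v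

/-- `B_{S,v,D}`: the set of vertices `u` such that every `r→u` path of `D−rv` meets `S`. -/
def Bset (D : Set (V × V)) (r v : V) (S : Set V) : Set V :=
  {u | ∀ P : DiPath V, IsPath (D \ {(r, v)}) r u P → (P.vertexSet ∩ S).Nonempty}

/-- `Ps` is an `r`-fan in `D`: paths of `D` starting at `r`, any two distinct members
having only the vertex `r` in common. -/
def IsRFan (D : Set (V × V)) (r : V) (Ps : Set (DiPath V)) : Prop :=
  (∀ P ∈ Ps, IsPathIn D P ∧ P.first = r) ∧
  ∀ P ∈ Ps, ∀ Q ∈ Ps, P ≠ Q → P.vertexSet ∩ Q.vertexSet = {r}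

/-- The set of first vertices of the paths in `Ps`. -/
def Vfirst (Ps : Set (DiPath V)) : Set V := DiPath.first '' Ps

/-- The set of last vertices of the paths in `Ps`. -/
def Vlast (Ps : Set (DiPath V)) : Set V := DiPath.last '' Ps

/-- `P` is an `X→Y` path in `D`: exactly its first vertex lies in `X` and
exactly its last vertex lies in `Y`. -/
def IsXYPath (D : Set (V × V)) (X Y : Set V) (P : DiPath V) : Prop :=
  IsPathIn D P ∧ P.vertexSet ∩ X = {P.first} ∧ P.vertexSet ∩ Y = {P.last}

/-- `Ps` is a system of pairwise (vertex-)disjoint `X→Y` paths of `D`. -/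
def DisjXYSystem (D : Set (V × V)) (X Y : Set V) (Ps : Set (DiPath V)) : Prop :=
  (∀ P ∈ Ps, IsXYPath D X Y P) ∧
  ∀ P ∈ Ps, ∀ Q ∈ Ps, P ≠ Q → P.vertexSet ∩ Q.vertexSet = ∅

/-- `κ_D(r,v)`: the maximum size of a (finite) system of internally disjoint `r→v`
paths of `D`. -/
noncomputable def kappa (D : Set (V × V)) (r v : V) : ℕ :=
  sSup {n : ℕ | ∃ Ps : Set (DiPath V), IntDisjSystem D r v Ps ∧ Ps.Finite ∧ Ps.ncard = n}
section Aux

open Classical in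
noncomputable instance : DecidableEq (DiPath V) := Classical.decEq _

lemma DiPath.first_mem (P : DiPath V) : P.first ∈ P.vertexSet := P.verts.head_mem P.ne

lemma DiPath.last_mem (P : DiPath V) : P.last ∈ P.vertexSet := P.verts.getLast_mem P.ne

lemma mem_zip_tail {l : List V} {a b : V} (h : (a, b) ∈ l.zip l.tail) :
    ∃ l₁ l₂, l = l₁ ++ a :: b :: l₂ := by
  induction l with
  | nil => simp at h
  | cons x t ih =>
    cases t with
    | nil => simp at h
    | cons y t' =>
      have : (a, b) = (x, y) ∨ (a, b) ∈ (y :: t').zip (y :: t').tail := by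
        simpa using h
      rcases this with h | h
      · obtain ⟨rfl, rfl⟩ := Prod.mk.injEq .. ▸ (Prod.ext_iff.mp h)
        exact ⟨[], t', rfl⟩
      · obtain ⟨l₁, l₂, hl⟩ := ih h
        exact ⟨x :: l₁, l₂, by simp [hl]⟩

lemma DiPath.edge_fst_mem {P : DiPath V} {e : V × V} (he : e ∈ P.edges) :
    e.1 ∈ P.vertexSet := (List.of_mem_zip he).1

lemma DiPath.edge_snd_mem {P : DiPath V} {e : V × V} (he : e ∈ P.edges) :
    e.2 ∈ P.vertexSet := List.mem_of_mem_tail (List.of_mem_zip he).2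

open Classical in
/-- From an edge of an `r→v` path different from `(r,v)` one can pick an internal
vertex of the path. -/
lemma pick_internal {D : Set (V × V)} {r v : V} {P : DiPath V} (hP : IsPath D r v P)
    {e : V × V} (he : e ∈ P.edges) (hne : e ≠ (r, v)) :
    (if e.1 = r then e.2 else e.1) ∈ P.internal := by
  obtain ⟨a, b⟩ := e
  obtain ⟨l₁, l₂, hl⟩ := mem_zip_tail (he : (a, b) ∈ P.verts.zip P.verts.tail)
  have hnd : (a :: b :: l₂).Nodup := by
    have := P.nodup; rw [hl] at this; exact this.sublist (List.sublist_append_right _ _)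
  have hab : a ≠ b := by
    have := hnd; simp only [List.nodup_cons, List.mem_cons] at this
    exact fun hh => this.1 (Or.inl hh)
  have hfirst : P.first = r := hP.2.1
  have hlast : P.last = v := hP.2.2
  by_cases har : a = r
  · rw [if_pos har]
    have hbv : b ≠ v := fun hb => hne (by rw [har, hb])
    have hbr : b ≠ r := by rw [← har]; exact fun hb => hab hb.symm
    refine ⟨DiPath.edge_snd_mem he, ?_⟩
    simp [hfirst, hlast, hbr, hbv]
  · -- a is internal: a ≠ r and a ≠ v since v is the last vertex
    have hav : a ≠ v := by
      intro hav
      have hv : P.last ∈ b :: l₂ := by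
        have hne2 : b :: l₂ ≠ [] := by simp
        have : P.verts.getLast P.ne = (b :: l₂).getLast hne2 := by
          have h1 : P.verts = (l₁ ++ [a]) ++ b :: l₂ := by simp [hl]
          rw [show P.verts.getLast P.ne = ((l₁ ++ [a]) ++ b :: l₂).getLast
              (by rw [← h1]; exact P.ne) from by congr 1]
          exact List.getLast_append_of_ne_nil _ hne2
        rw [DiPath.last, this]
        exact List.getLast_mem hne2
      rw [hlast, ← hav] at hv
      have := hnd; simp only [List.nodup_cons] at this
      exact this.1 hv
    rw [if_neg har]
    refine ⟨DiPath.edge_fst_mem he, ?_⟩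
    simp [hfirst, hlast, har, hav]

/-- The two-vertex path `r → v`. -/
def twoPath (r v : V) (h : v ≠ r) : DiPath V :=
  ⟨[r, v], by simp, by simp [Ne.symm h]⟩

@[simp] lemma twoPath_first (r v : V) (h : v ≠ r) : (twoPath r v h).first = r := rfl

@[simp] lemma twoPath_last (r v : V) (h : v ≠ r) : (twoPath r v h).last = v := rfl

@[simp] lemma twoPath_verts (r v : V) (h : v ≠ r) : (twoPath r v h).verts = [r, v] := rfl

lemma twoPath_edges (r v : V) (h : v ≠ r) : (twoPath r v h).edges = {(r, v)} := by
  ext e; simp [DiPath.edges, twoPath]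

lemma twoPath_vertexSet (r v : V) (h : v ≠ r) :
    (twoPath r v h).vertexSet = {r, v} := by
  ext x; simp [DiPath.vertexSet, twoPath]

lemma twoPath_internal (r v : V) (h : v ≠ r) : (twoPath r v h).internal = ∅ := by
  ext x
  simp only [DiPath.internal, twoPath_vertexSet, Set.mem_diff, Set.mem_insert_iff,
    Set.mem_singleton_iff, twoPath_first, twoPath_last, Set.mem_empty_iff_false, iff_false]
  tauto

lemma twoPath_isPath {D : Set (V × V)} {r v : V} (h : v ≠ r) (hD : (r, v) ∈ D) :
    IsPath D r v (twoPath r v h) :=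
  ⟨by rw [IsPathIn, twoPath_edges]; simpa using hD, rfl, rfl⟩

lemma isPathIn_mono {D D' : Set (V × V)} (h : D ⊆ D') {P : DiPath V}
    (hP : IsPathIn D P) : IsPathIn D' P := hP.trans h

lemma isPath_mono {D D' : Set (V × V)} (h : D ⊆ D') {r v : V} {P : DiPath V}
    (hP : IsPath D r v P) : IsPath D' r v P := ⟨isPathIn_mono h hP.1, hP.2.1, hP.2.2⟩

end Aux

/-- Reformulation of largeness: `L ⊆ D` is `D`-vertex-large iff `L` contains all
outgoing edges of `r` in `D` and `𝔖_L(v) ∩ 𝔖_D(v) ≠ ∅` for every `v ≠ r`. -/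
theorem reform_largeness {V : Type u} [Infinite V] (r : V) (D L : Set (V × V))
    (hroot : IsRooted D r) (hLD : L ⊆ D) :
    IsLarge D L r ↔
      outEdges D r ⊆ L ∧ ∀ v, v ≠ r → (SepSet L r v ∩ SepSet D r v).Nonempty := by
  classical
  constructor
  · rintro ⟨-, hlarge⟩
    constructor
    · -- outgoing edges of r belong to L
      rintro ⟨a, v⟩ ⟨haD, ha⟩
      have ha' : a = r := ha
      rw [ha'] at haD ⊢
      have hvr : v ≠ r := by
        intro h
        have : (r, r) ∈ inEdges D r := ⟨h ▸ haD, rfl⟩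
        rw [hroot] at this; exact this
      obtain ⟨Ps, ⟨⟨hsys, -⟩, sel, hsel, hhit⟩, hlies⟩ := hlarge v hvr
      obtain ⟨P, hPPs, hPl, hPr⟩ := hhit (twoPath r v hvr) (twoPath_isPath hvr haD)
      cases hselP : sel P with
      | inl x =>
          have hx : x ∈ P.internal := (hsel P hPPs).1 x hselP
          have hx2 : x ∈ (twoPath r v hvr).vertexSet := hPl x hselP
          rw [twoPath_vertexSet] at hx2
          have hPfirst : P.first = r := (hsys P hPPs).2.1
          have hPlast : P.last = v := (hsys P hPPs).2.2
          exact (hx.2 (by rw [hPfirst, hPlast]; exact hx2)).elim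
      | inr e =>
          have he : e ∈ (twoPath r v hvr).edges := hPr e hselP
          rw [twoPath_edges, Set.mem_singleton_iff] at he
          subst he
          exact hlies P hPPs ((hsel P hPPs).2 (r, v) hselP)
    · -- separations exist
      intro v hvr
      obtain ⟨Ps, ⟨⟨hsys, hdisj⟩, sel, hsel, hhit⟩, hlies⟩ := hlarge v hvr
      -- drop paths whose selection is the edge (r,v)
      set Ps' : Set (DiPath V) := {P ∈ Ps | sel P ≠ Sum.inr (r, v)} with hPs'
      -- selection of internal vertices
      set sel' : DiPath V → V := fun P =>
        match sel P with
        | Sum.inl x => x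
        | Sum.inr e => if e.1 = r then e.2 else e.1 with hsel'
      have hsel'int : ∀ P ∈ Ps', sel' P ∈ P.internal := by
        rintro P ⟨hPPs, hPne⟩
        cases hselP : sel P with
        | inl x =>
            have : sel' P = x := by simp [hsel', hselP]
            rw [this]; exact (hsel P hPPs).1 x hselP
        | inr e =>
            have he : e ∈ P.edges := (hsel P hPPs).2 e hselP
            have hne : e ≠ (r, v) := by intro h; rw [h] at hselP; exact hPne hselP
            have : sel' P = if e.1 = r then e.2 else e.1 := by simp [hsel', hselP]
            rw [this]; exact pick_internal (hsys P hPPs) he hne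
      set S : Set V := sel' '' Ps' with hS
      have hPint : ∀ P ∈ Ps', P.internal ∩ ({r, v} : Set V) = ∅ := by
        rintro P ⟨hPPs, -⟩
        ext x
        simp only [Set.mem_inter_iff, DiPath.internal, Set.mem_diff,
          Set.mem_insert_iff, Set.mem_singleton_iff, Set.mem_empty_iff_false, iff_false]
        rintro ⟨⟨-, hnx⟩, hx⟩
        exact hnx (by rw [(hsys P hPPs).2.1, (hsys P hPPs).2.2]; exact hx)
      have hrS : r ∉ S := by
        rintro ⟨P, hP, hPeq⟩
        have h1 : r ∈ P.internal := hPeq ▸ hsel'int P hP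
        have h3 : r ∈ P.internal ∩ ({r, v} : Set V) := ⟨h1, Or.inl rfl⟩
        rw [hPint P hP] at h3; exact h3
      have hvS : v ∉ S := by
        rintro ⟨P, hP, hPeq⟩
        have h1 : v ∈ P.internal := hPeq ▸ hsel'int P hP
        have h3 : v ∈ P.internal ∩ ({r, v} : Set V) := ⟨h1, Or.inr rfl⟩
        rw [hPint P hP] at h3; exact h3
      have hsepD : Separates (D \ {(r, v)}) r v S := by
        intro Q hQ
        have hQD : IsPath D r v Q := isPath_mono Set.diff_subset hQ
        obtain ⟨P, hPPs, hPl, hPr⟩ := hhit Q hQD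
        cases hselP : sel P with
        | inl x =>
            have hP' : P ∈ Ps' := ⟨hPPs, by rw [hselP]; simp⟩
            refine ⟨sel' P, ?_, ⟨P, hP', rfl⟩⟩
            have : sel' P = x := by simp [hsel', hselP]
            rw [this]; exact hPl x hselP
        | inr e =>
            have he : e ∈ Q.edges := hPr e hselP
            have hne : e ≠ (r, v) := by
              intro h; rw [h] at he
              exact (hQ.1 he).2 rfl
            have hP' : P ∈ Ps' := ⟨hPPs, by rw [hselP]; simp [hne]⟩
            refine ⟨sel' P, ?_, ⟨P, hP', rfl⟩⟩
            have : sel' P = if e.1 = r then e.2 else e.1 := by simp [hsel', hselP]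
            rw [this]
            split
            · exact Q.edge_snd_mem he
            · exact Q.edge_fst_mem he
      have hsub : Ps' ⊆ Ps := fun P hP => hP.1
      refine ⟨S, ⟨hrS, hvS, ?_, Ps', ⟨?_, ?_⟩, sel', hsel'int, rfl⟩,
        hrS, hvS, hsepD, Ps', ⟨?_, ?_⟩, sel', hsel'int, rfl⟩
      · -- Separates in L \ {(r,v)}
        intro Q hQ
        exact hsepD Q (isPath_mono (Set.diff_subset_diff_left hLD) hQ)
      · exact fun P hP => ⟨hlies P (hsub hP), (hsys P (hsub hP)).2.1, (hsys P (hsub hP)).2.2⟩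
      · exact fun P hP Q hQ hne => hdisj P (hsub hP) Q (hsub hQ) hne
      · exact fun P hP => hsys P (hsub hP)
      · exact fun P hP Q hQ hne => hdisj P (hsub hP) Q (hsub hQ) hne
  · rintro ⟨hout, hsep⟩
    refine ⟨hLD, ?_⟩
    intro v hvr
    obtain ⟨S, hSL, hSD⟩ := hsep v hvr
    obtain ⟨hrS, hvS, hsepL, Ps, ⟨hsysL, hdisjL⟩, sel, hselint, hSeq⟩ := hSL
    obtain ⟨-, -, hsepD, -⟩ := hSD
    have hsysD : ∀ P ∈ Ps, IsPath D r v P := fun P hP => isPath_mono hLD (hsysL P hP)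
    by_cases hrv : (r, v) ∈ D
    · -- add the path consisting of the single edge (r,v)
      set P₀ := twoPath r v hvr with hP₀
      have hP₀Ps : P₀ ∉ Ps := by
        intro h
        have := hselint P₀ h
        rw [twoPath_internal] at this
        exact this
      set Ps' : Set (DiPath V) := insert P₀ Ps with hPs'
      set sel'' : DiPath V → V ⊕ (V × V) := fun P =>
        if P = P₀ then Sum.inr (r, v) else Sum.inl (sel P) with hsel''
      have hmem : ∀ P ∈ Ps', P = P₀ ∨ (P ∈ Ps ∧ P ≠ P₀) := by
        rintro P (h | h)
        · exact Or.inl h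
        · exact Or.inr ⟨h, fun hh => hP₀Ps (hh ▸ h)⟩
      refine ⟨Ps', ⟨⟨?_, ?_⟩, sel'', ?_, ?_⟩, ?_⟩
      · rintro P hP
        rcases hmem P hP with rfl | ⟨hP, -⟩
        · exact twoPath_isPath hvr hrv
        · exact hsysD P hP
      · -- internal disjointness
        have hrvP : ∀ P ∈ Ps, ({r, v} : Set V) ⊆ P.vertexSet := by
          intro P hP x hx
          rcases hx with rfl | hx
          · rw [← (hsysD P hP).2.1]; exact P.first_mem
          · rw [Set.mem_singleton_iff] at hx; subst hx
            rw [← (hsysD P hP).2.2]; exact P.last_mem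
        rintro P hP Q hQ hne
        rcases hmem P hP with rfl | ⟨hP1, hPne⟩ <;> rcases hmem Q hQ with rfl | ⟨hQ1, hQne⟩
        · exact absurd rfl hne
        · rw [twoPath_vertexSet]
          exact Set.inter_eq_left.mpr (hrvP Q hQ1)
        · rw [twoPath_vertexSet]
          exact Set.inter_eq_right.mpr (hrvP P hP1)
        · exact hdisjL P hP1 Q hQ1 hne
      · -- selection validity
        rintro P hP
        rcases hmem P hP with rfl | ⟨hP1, hPne⟩
        · constructor
          · intro x hx; rw [hsel''] at hx; simp at hx
          · intro e he
            rw [hsel''] at he; simp at he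
            rw [← he, twoPath_edges]; rfl
        · constructor
          · intro x hx
            rw [hsel''] at hx; simp [hPne] at hx
            rw [← hx]; exact hselint P hP1
          · intro e he
            rw [hsel''] at he; simp [hPne] at he
      · -- hitting every r→v path of D
        intro Q hQ
        by_cases hQrv : (r, v) ∈ Q.edges
        · refine ⟨P₀, Or.inl rfl, ?_, ?_⟩
          · intro x hx; rw [hsel''] at hx; simp at hx
          · intro e he
            rw [hsel''] at he; simp at he
            rw [← he]; exact hQrv
        · have hQ' : IsPath (D \ {(r, v)}) r v Q := by
            refine ⟨fun e he => ⟨hQ.1 he, fun h => ?_⟩, hQ.2.1, hQ.2.2⟩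
            simp only [Set.mem_singleton_iff] at h
            exact hQrv (h ▸ he)
          obtain ⟨x, hxQ, hxS⟩ := hsepD Q hQ'
          rw [hSeq] at hxS
          obtain ⟨P, hPPs, hPx⟩ := hxS
          have hPne : P ≠ P₀ := fun h => hP₀Ps (h ▸ hPPs)
          refine ⟨P, Or.inr hPPs, ?_, ?_⟩
          · intro y hy
            rw [hsel''] at hy; simp [hPne] at hy
            rw [← hy, hPx]; exact hxQ
          · intro e he
            rw [hsel''] at he; simp [hPne] at he
      · -- lies in L
        rintro P hP
        rcases hmem P hP with rfl | ⟨hP1, -⟩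
        · rw [IsPathIn, twoPath_edges]
          intro e he; rw [Set.mem_singleton_iff] at he; subst he
          exact hout ⟨hrv, rfl⟩
        · exact (hsysL P hP1).1
    · -- (r,v) ∉ D : the system Ps itself works
      refine ⟨Ps, ⟨⟨hsysD, hdisjL⟩, fun P => Sum.inl (sel P), ?_, ?_⟩,
        fun P hP => (hsysL P hP).1⟩
      · intro P hP
        exact ⟨fun x hx => by cases hx; exact hselint P hP, fun e he => by cases he⟩
      · intro Q hQ
        have hQ' : IsPath (D \ {(r, v)}) r v Q := by
          refine ⟨fun e he => ⟨hQ.1 he, fun h => ?_⟩, hQ.2.1, hQ.2.2⟩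
          simp only [Set.mem_singleton_iff] at h
          exact hrv (h ▸ hQ.1 he)
        obtain ⟨x, hxQ, hxS⟩ := hsepD Q hQ'
        rw [hSeq] at hxS
        obtain ⟨P, hPPs, hPx⟩ := hxS
        exact ⟨P, hPPs, fun y hy => by cases hy; rw [hPx]; exact hxQ, fun e he => by cases he⟩

end FlamePaper
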